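/- Suppose in a finite directed graph every vertex u with d(u,i) ≤ k−1 has its correct tuple recorded, and the update rule recomputes each vertex's table as its own tuple at distance 0 together with predecessors' tuples with distance incremented, keeping only minimum-distance entries. Then after one more synchronous update, every vertex u with d(u,i) ≤ k has its correct tuple recorded at i (induction step of topology collection). -/

import Mathlib

/-- `PathLen E u v m` : there is a directed path of length `m` from `u` to `v`. -/
def PathLen {V : Type*} (E : V → V → Prop) (u v : V) (m : ℕ) : Prop :=
  ∃ p : Fin (m + 1) → V, p 0 = u ∧ p (Fin.last m) = v ∧
    ∀ a : Fin m, E (p a.castSucc) (p a.succ)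

/-- `IsDist E u v n` : `n` is the distance from `u` to `v`, i.e. the length of a shortest
directed path from `u` to `v`. -/
def IsDist {V : Type*} (E : V → V → Prop) (u v : V) (n : ℕ) : Prop :=
  PathLen E u v n ∧ ∀ m : ℕ, PathLen E u v m → n ≤ m

/-- The set of predecessors of a vertex. -/
def Preds {V : Type*} (E : V → V → Prop) (v : V) : Set V := {u | E u v}

/-- The first clause of the invariant after round `k`: every vertex `u` at distance
`< k` from `i` has its correct tuple `(u, P.u, d(u,i))` recorded in the table of `i`. -/
def Inv1 {V : Type*} (E : V → V → Prop) (T : V → Set (V × Set V × ℕ)) (k : ℕ) : Prop :=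
  ∀ i u : V, ∀ n : ℕ, IsDist E u i n → n < k → (u, Preds E u, n) ∈ T i

/-- The second clause of the invariant after round `k`: every recorded tuple with distance
field `< k` is correct. -/
def Inv2 {V : Type*} (E : V → V → Prop) (T : V → Set (V × Set V × ℕ)) (k : ℕ) : Prop :=
  ∀ i u : V, ∀ P : Set V, ∀ n : ℕ, (u, P, n) ∈ T i → n < k →
    P = Preds E u ∧ IsDist E u i n

/-- The raw table obtained at `i` by one update step: `i`'s own tuple at distance `0`
together with the predecessors' tuples with distance incremented. -/
def RawUpdate {V : Type*} (E : V → V → Prop) (T : V → Set (V × Set V × ℕ)) (i : V) :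
    Set (V × Set V × ℕ) :=
  {(i, Preds E i, 0)} ∪
    {t : V × Set V × ℕ | ∃ j : V, E j i ∧ ∃ P : Set V, ∃ n : ℕ,
      (t.1, P, n) ∈ T j ∧ t.2.1 = P ∧ t.2.2 = n + 1}

/-- One synchronous update step: recompute the raw table and keep, for each vertex key,
only the entries of minimum distance. -/
def Update {V : Type*} (E : V → V → Prop) (T : V → Set (V × Set V × ℕ)) (i : V) :
    Set (V × Set V × ℕ) :=
  {t ∈ RawUpdate E T i | ∀ t' ∈ RawUpdate E T i, t'.1 = t.1 → t.2.2 ≤ t'.2.2}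

/-- Induction step of the topology-collection lemma: if, at every vertex, the table is
correct up to distance `k - 1` (both invariant clauses at `k`), then after one more
synchronous update step both clauses hold at `k + 1`; in particular every vertex `u` with
`d(u, i) ≤ k` has its correct tuple recorded at `i`. -/
lemma pathLen_zero {V : Type*} (E : V → V → Prop) (u : V) : PathLen E u u 0 :=
  ⟨fun _ => u, rfl, rfl, fun a => a.elim0⟩

lemma pathLen_zero_eq {V : Type*} {E : V → V → Prop} {u v : V} (h : PathLen E u v 0) :
    u = v := by
  obtain ⟨p, h0, hl, _⟩ := h
  rw [← h0, ← hl]; rfl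

lemma pathLen_succ {V : Type*} {E : V → V → Prop} {u v : V} {m : ℕ} :
    PathLen E u v (m + 1) ↔ ∃ j, PathLen E u j m ∧ E j v := by
  constructor
  · rintro ⟨p, h0, hl, he⟩
    refine ⟨p (Fin.last m).castSucc, ⟨p ∘ Fin.castSucc, ?_, rfl, ?_⟩, ?_⟩
    · simpa using h0
    · intro a
      have := he a.castSucc
      simpa only [Function.comp_apply, Fin.succ_castSucc] using this
    · have := he (Fin.last m)
      simpa [Fin.succ_last, hl] using this
  · rintro ⟨j, ⟨p, h0, hl, he⟩, hE⟩
    refine ⟨Fin.snoc p v, ?_, by simp, ?_⟩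
    · have h0' : (0 : Fin (m + 2)) = Fin.castSucc 0 := by simp
      rw [h0', Fin.snoc_castSucc, h0]
    · intro a
      induction a using Fin.lastCases with
      | last =>
        rw [Fin.succ_last, Fin.snoc_last, Fin.snoc_castSucc, hl]
        exact hE
      | cast b =>
        rw [Fin.succ_castSucc, Fin.snoc_castSucc, Fin.snoc_castSucc]
        exact he b

lemma exists_isDist {V : Type*} {E : V → V → Prop} {u v : V} {m : ℕ}
    (h : PathLen E u v m) : ∃ d, IsDist E u v d ∧ d ≤ m := by
  classical
  have hex : ∃ n, PathLen E u v n := ⟨m, h⟩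
  exact ⟨Nat.find hex, ⟨Nat.find_spec hex, fun m' hm' => Nat.find_le hm'⟩, Nat.find_le h⟩

lemma isDist_succ {V : Type*} {E : V → V → Prop} {u i : V} {m : ℕ}
    (h : IsDist E u i (m + 1)) : ∃ j, E j i ∧ IsDist E u j m := by
  obtain ⟨hp, hmin⟩ := h
  obtain ⟨j, hpj, hE⟩ := pathLen_succ.mp hp
  obtain ⟨d, hd, hdm⟩ := exists_isDist hpj
  have h1 : m + 1 ≤ d + 1 := hmin _ (pathLen_succ.mpr ⟨j, hd.1, hE⟩)
  have h2 : d = m := le_antisymm hdm (by omega)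
  exact ⟨j, hE, h2 ▸ hd⟩

theorem stmt17 {V : Type*} [Fintype V] (E : V → V → Prop)
    (T : V → Set (V × Set V × ℕ)) (k : ℕ)
    (h1 : Inv1 E T k) (h2 : Inv2 E T k) :
    Inv1 E (fun i => Update E T i) (k + 1) ∧ Inv2 E (fun i => Update E T i) (k + 1) := by
  constructor
  · -- Inv1 at k+1
    intro i u n hdist hn
    match n, hdist, hn with
    | 0, hdist, hn =>
      have hu : u = i := pathLen_zero_eq hdist.1
      subst hu
      exact ⟨Or.inl rfl, fun t' _ _ => Nat.zero_le _⟩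
    | m + 1, hdist, hn =>
      obtain ⟨j, hE, hdj⟩ := isDist_succ hdist
      have hT : (u, Preds E u, m) ∈ T j := h1 j u m hdj (by omega)
      refine ⟨Or.inr ⟨j, hE, Preds E u, m, hT, rfl, rfl⟩, ?_⟩
      rintro t' (ht' | ⟨j', hE', P', n', hTj', hP', hn'⟩) hkey
      all_goals simp only at hkey
      · -- t' is the self tuple (i, Preds E i, 0)
        exfalso
        have ht'' : t' = (i, Preds E i, 0) := ht'
        have hui : u = i := by rw [← hkey, ht'']
        subst hui
        have := hdist.2 0 (pathLen_zero E u)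
        omega
      · -- t' comes from a predecessor j'
        show (m + 1 : ℕ) ≤ t'.2.2
        rw [hn']
        by_cases hlt : n' < k
        · rw [hkey] at hTj'
          have := h2 j' u P' n' hTj' hlt
          have hpath : PathLen E u i (n' + 1) := pathLen_succ.mpr ⟨j', this.2.1, hE'⟩
          exact hdist.2 _ hpath
        · omega
  · -- Inv2 at k+1
    intro i u P n hmem hn
    obtain ⟨hraw, hmin2⟩ := hmem
    rcases hraw with hself | ⟨j, hE, P', n', hTj, hP', hn'⟩
    · have hself' : (u, P, n) = (i, Preds E i, 0) := hself
      rw [Prod.mk.injEq, Prod.mk.injEq] at hself'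
      obtain ⟨hu, hP, hnn⟩ := hself'
      subst hu hP hnn
      exact ⟨rfl, pathLen_zero E u, fun m _ => Nat.zero_le _⟩
    · simp only at hTj hP' hn'
      subst hP' hn'
      have hn'k : n' < k := by omega
      obtain ⟨hPu, hdj⟩ := h2 j u P n' hTj hn'k
      subst hPu
      refine ⟨rfl, pathLen_succ.mpr ⟨j, hdj.1, hE⟩, ?_⟩
      intro m hm
      by_contra hcon
      push_neg at hcon
      obtain ⟨d, hd, hdm⟩ := exists_isDist hm
      match d, hd, hdm with
      | 0, hd, hdm =>
        have hui : u = i := pathLen_zero_eq hd.1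
        have hle : (n' + 1 : ℕ) ≤ 0 := by
          have := hmin2 (i, Preds E i, 0) (Or.inl rfl) (by simp [hui])
          exact this
        omega
      | m'' + 1, hd, hdm =>
        obtain ⟨j', hE', hdj'⟩ := isDist_succ hd
        have hm''k : m'' < k := by omega
        have hT' : (u, Preds E u, m'') ∈ T j' := h1 j' u m'' hdj' hm''k
        have hraw' : (u, Preds E u, m'' + 1) ∈ RawUpdate E T i :=
          Or.inr ⟨j', hE', Preds E u, m'', hT', rfl, rfl⟩
        have hle := hmin2 (u, Preds E u, m'' + 1) hraw' rfl
        simp only at hle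
        omega
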